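/- Let H be a reduced, commutative, cancellative, atomic monoid. Then c_adj(H) ≤ sup{|y| : (x,y) ∈ A(∼_{H,mon}), |x| < |y|, the lengths |x| and |y| are adjacent elements of L(π(x)), and there is no monotone R-chain from x to y}. -/
import Mathlib


namespace CMR

variable {α : Type*} [CancelCommMonoid α]

/-- The factorization monoid `Z(H)`: the free abelian monoid over the set of atoms of `H`,
modeled as multisets of atoms. -/
abbrev Fac (α : Type*) [CancelCommMonoid α] : Type _ := Multiset {u : α // Irreducible u}

/-- The factorization homomorphism `π : Z(H) → H`. -/
def piF (z : Fac α) : α := (z.map Subtype.val).prod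

/-- `Z a`: the set of factorizations of `a`. -/
def Z (a : α) : Set (Fac α) := {z | piF z = a}

/-- `L a`: the set of lengths of `a`. -/
def L (a : α) : Set ℕ := {n | ∃ z ∈ Z a, Multiset.card z = n}

/-- `Zk a k`: the factorizations of `a` of length `k`. -/
def Zk (a : α) (k : ℕ) : Set (Fac α) := {z ∈ Z a | Multiset.card z = k}

/-- `ZM a M`: the factorizations of `a` whose length lies in `M`. -/
def ZM (a : α) (M : Set ℕ) : Set (Fac α) := {z ∈ Z a | Multiset.card z ∈ M}

/-- The distance between two factorizations:
`d(z,z') = max (|z / gcd(z,z')|, |z' / gcd(z,z')|)`. -/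
noncomputable def d (z z' : Fac α) : ℕ :=
  letI := Classical.decEq {u : α // Irreducible u}
  max (Multiset.card (z - z')) (Multiset.card (z' - z))

/-- The distance between two sets of factorizations, the minimum of pairwise
distances (with the convention `sInf ∅ = 0`). -/
noncomputable def dS (X Y : Set (Fac α)) : ℕ :=
  sInf {n : ℕ | ∃ x ∈ X, ∃ y ∈ Y, d x y = n}

/-- `k` and `l` are adjacent lengths of `a` (with `k < l`):
`L(a) ∩ [k, l] = {k, l}`. -/
def Adjacent (a : α) (k l : ℕ) : Prop :=
  k ∈ L a ∧ l ∈ L a ∧ k < l ∧ ∀ m ∈ L a, k ≤ m → m ≤ l → m = k ∨ m = l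

/-- A chain of factorizations of `a` from `z` to `z'` whose consecutive members
satisfy the step predicate `P`. -/
def Chain (a : α) (P : Fac α → Fac α → Prop) (z z' : Fac α) : Prop :=
  ∃ (n : ℕ) (c : Fin (n + 1) → Fac α),
    c 0 = z ∧ c (Fin.last n) = z' ∧ (∀ i, c i ∈ Z a) ∧
    ∀ i : Fin n, P (c i.castSucc) (c i.succ)

/-- The catenary degree of an element: the smallest `N ∈ ℕ∞` such that any two
factorizations of `a` are connected by an `N`-chain. -/
noncomputable def cat (a : α) : ℕ∞ :=
  sInf {N : ℕ∞ | ∀ z ∈ Z a, ∀ z' ∈ Z a,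
    Chain a (fun x y => (d x y : ℕ∞) ≤ N) z z'}

/-- The equal catenary degree of an element: the smallest `N ∈ ℕ∞` such that any two
factorizations of `a` of the same length are connected by an equal-length `N`-chain. -/
noncomputable def ceq (a : α) : ℕ∞ :=
  sInf {N : ℕ∞ | ∀ z ∈ Z a, ∀ z' ∈ Z a, Multiset.card z = Multiset.card z' →
    Chain a (fun x y => (d x y : ℕ∞) ≤ N ∧ Multiset.card x = Multiset.card y) z z'}

/-- The monotone catenary degree of an element: the smallest `N ∈ ℕ∞` such that any two
factorizations of `a` (ordered by length) are connected by a monotone `N`-chain. -/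
noncomputable def cmon (a : α) : ℕ∞ :=
  sInf {N : ℕ∞ | ∀ z ∈ Z a, ∀ z' ∈ Z a, Multiset.card z ≤ Multiset.card z' →
    Chain a (fun x y => (d x y : ℕ∞) ≤ N ∧ Multiset.card x ≤ Multiset.card y) z z'}

/-- The adjacent catenary degree of an element:
`c_adj(a) = sup{d(Z_k(a), Z_l(a)) : k, l ∈ L(a) adjacent}`. -/
noncomputable def cadj (a : α) : ℕ∞ :=
  sSup {r : ℕ∞ | ∃ k l : ℕ, Adjacent a k l ∧ r = (dS (Zk a k) (Zk a l) : ℕ∞)}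

noncomputable def catH (α : Type*) [CancelCommMonoid α] : ℕ∞ := ⨆ a : α, cat a
noncomputable def ceqH (α : Type*) [CancelCommMonoid α] : ℕ∞ := ⨆ a : α, ceq a
noncomputable def cmonH (α : Type*) [CancelCommMonoid α] : ℕ∞ := ⨆ a : α, cmon a
noncomputable def cadjH (α : Type*) [CancelCommMonoid α] : ℕ∞ := ⨆ a : α, cadj a

/-- `gcd(x, y) ≠ 1`: the two factorizations share an atom. -/
def RStep (x y : Fac α) : Prop := ∃ u, u ∈ x ∧ u ∈ y

/-- `z ≈ z'`: there is an `R`-chain concatenating `z` and `z'` in `Z a`. -/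
def RRel (a : α) (z z' : Fac α) : Prop := Chain a RStep z z'

/-- `z ≈_eq z'`: there is an equal-length `R`-chain concatenating `z` and `z'` in `Z a`. -/
def RRelEq (a : α) (z z' : Fac α) : Prop :=
  Chain a (fun x y => RStep x y ∧ Multiset.card x = Multiset.card y) z z'

/-- There is a monotone `R`-chain from `z` to `z'` in `Z a`. -/
def MonRChain (a : α) (z z' : Fac α) : Prop :=
  Chain a (fun x y => RStep x y ∧ Multiset.card x ≤ Multiset.card y) z z'

/-- `μ(a)`: the supremum, over the `R`-classes `ρ` of `Z a`, of the minimal length of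
an element of `ρ`. -/
noncomputable def mu (a : α) : ℕ∞ :=
  sSup {r : ℕ∞ | ∃ z ∈ Z a,
    r = ((sInf {n : ℕ | ∃ z', RRel a z z' ∧ Multiset.card z' = n} : ℕ) : ℕ∞)}

noncomputable def muH (α : Type*) [CancelCommMonoid α] : ℕ∞ := ⨆ a : α, mu a

/-- `μ_eq(a) = sup{k ∈ L(a) : Z_k(a) has more than one ≈_eq-class}`. -/
noncomputable def mueq (a : α) : ℕ∞ :=
  sSup {r : ℕ∞ | ∃ k ∈ L a,
    (∃ z ∈ Zk a k, ∃ z' ∈ Zk a k, ¬ RRelEq a z z') ∧ r = (k : ℕ∞)}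

noncomputable def mueqH (α : Type*) [CancelCommMonoid α] : ℕ∞ := ⨆ a : α, mueq a

/-- `μ_adj(a) = sup{k ∈ L(a) : d(Z_k(a), Z_l(a)) = k for the l ∈ L(a), l < k adjacent to k}`. -/
noncomputable def muadj (a : α) : ℕ∞ :=
  sSup {r : ℕ∞ | ∃ k ∈ L a,
    (∃ l : ℕ, Adjacent a l k ∧ dS (Zk a k) (Zk a l) = k) ∧ r = (k : ℕ∞)}

noncomputable def muadjH (α : Type*) [CancelCommMonoid α] : ℕ∞ := ⨆ a : α, muadj a

/-- The monoid of relations of `H`, as a subset of `Z(H) × Z(H)`. -/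
def relMon (α : Type*) [CancelCommMonoid α] : Set (Fac α × Fac α) :=
  {p | piF p.1 = piF p.2}

/-- The monoid of equal-length relations of `H`. -/
def relMonEq (α : Type*) [CancelCommMonoid α] : Set (Fac α × Fac α) :=
  {p | piF p.1 = piF p.2 ∧ Multiset.card p.1 = Multiset.card p.2}

/-- The monoid of monotone relations of `H`. -/
def relMonMon (α : Type*) [CancelCommMonoid α] : Set (Fac α × Fac α) :=
  {p | piF p.1 = piF p.2 ∧ Multiset.card p.1 ≤ Multiset.card p.2}

/-- `p` is an atom (irreducible element) of the reduced submonoid `S` of `Z(H) × Z(H)`. -/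
def IsAtomIn (S : Set (Fac α × Fac α)) (p : Fac α × Fac α) : Prop :=
  p ∈ S ∧ p ≠ 0 ∧ ∀ q ∈ S, ∀ r ∈ S, p = q + r → q = 0 ∨ r = 0

/-- `A_a(S) = A(S) ∩ (Z(a) × Z(a))`. -/
def AtomsAt (S : Set (Fac α × Fac α)) (a : α) : Set (Fac α × Fac α) :=
  {p | IsAtomIn S p ∧ p.1 ∈ Z a ∧ p.2 ∈ Z a}

/-- The tame degree `t(a, x)`. -/
noncomputable def tdeg (a : α) (x : Fac α) : ℕ∞ :=
  sInf {N : ℕ∞ | ∀ z ∈ Z a, (∃ w ∈ Z a, x ≤ w) →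
    ∃ z' ∈ Z a, x ≤ z' ∧ (d z z' : ℕ∞) ≤ N}

/-- The tame degree `t(H) = sup{t(a, u) : a ∈ H, u ∈ A(H)}`. -/
noncomputable def tH (α : Type*) [CancelCommMonoid α] : ℕ∞ :=
  ⨆ (a : α) (u : {u : α // Irreducible u}), tdeg a {u}

/-- The `m`-adjacent catenary degree of an element:
`c_{ad,m}(a) = sup{d(Z_k(a), Z_{[k-m,k)}(a)) : k ∈ L(a)}`. -/
noncomputable def cadm (m : ℕ) (a : α) : ℕ∞ :=
  sSup {r : ℕ∞ | ∃ k ∈ L a, r = (dS (Zk a k) (ZM a (Set.Ico (k - m) k)) : ℕ∞)}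

noncomputable def cadmH (α : Type*) [CancelCommMonoid α] (m : ℕ) : ℕ∞ := ⨆ a : α, cadm m a

/-- `μ_{ad,m}(a) = sup{k ∈ L(a) : d(Z_k(a), Z_{[k-m,k)}(a)) = k}`. -/
noncomputable def muadm (m : ℕ) (a : α) : ℕ∞ :=
  sSup {r : ℕ∞ | ∃ k ∈ L a, dS (Zk a k) (ZM a (Set.Ico (k - m) k)) = k ∧ r = (k : ℕ∞)}

noncomputable def muadmH (α : Type*) [CancelCommMonoid α] (m : ℕ) : ℕ∞ := ⨆ a : α, muadm m a

/-- `H` is reduced: the only unit is `1`. -/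
def Reduced (α : Type*) [CancelCommMonoid α] : Prop := ∀ a : α, IsUnit a → a = 1

/-- `H` is atomic: every element is a product of atoms. -/
def Atomic (α : Type*) [CancelCommMonoid α] : Prop := ∀ a : α, ∃ z : Fac α, piF z = a

/-- The ascending chain condition on principal ideals. -/
def ACCP (α : Type*) [CancelCommMonoid α] : Prop :=
  ∀ f : ℕ → α, (∀ n, f (n + 1) ∣ f n) → ∃ N, ∀ n, N ≤ n → f N ∣ f n

section Aux

lemma piF_add (s t : Fac α) : piF (s + t) = piF s * piF t := by
  simp [piF]

lemma d_eq (z z' : Fac α) :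
    letI := Classical.decEq {u : α // Irreducible u}
    d z z' = max (Multiset.card (z - z')) (Multiset.card (z' - z)) := rfl

lemma msub_add_right {β : Type*} [DecidableEq β] (s t g : Multiset β) :
    (s + g) - (t + g) = s - t := by
  ext u
  simp only [Multiset.count_sub, Multiset.count_add]
  omega

lemma card_msub_le {β : Type*} [DecidableEq β] (s t : Multiset β) :
    Multiset.card (s - t) ≤ Multiset.card s :=
  Multiset.card_le_card (tsub_le_self)

lemma card_msub_shared {β : Type*} [DecidableEq β] {s t : Multiset β} {u : β}
    (hs : u ∈ s) (ht : u ∈ t) : Multiset.card (s - t) + 1 ≤ Multiset.card s := by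
  have h1 : s - t ≤ s - {u} := tsub_le_tsub_left (Multiset.singleton_le.mpr ht) s
  have h2 : Multiset.card (s - {u}) = Multiset.card s - 1 := by
    rw [Multiset.sub_singleton, Multiset.card_erase_of_mem hs, Nat.pred_eq_sub_one]
  have h3 := Multiset.card_le_card h1
  have h4 : 0 < Multiset.card s := Multiset.card_pos_iff_exists_mem.mpr ⟨u, hs⟩
  omega

lemma key13 {a : α} {k l : ℕ} (hadj : Adjacent a k l) :
    ∃ p : Fac α × Fac α, IsAtomIn (relMonMon α) p ∧
      Multiset.card p.1 < Multiset.card p.2 ∧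
      Adjacent (piF p.1) (Multiset.card p.1) (Multiset.card p.2) ∧
      ¬ MonRChain (piF p.1) p.1 p.2 ∧
      dS (Zk a k) (Zk a l) = Multiset.card p.2 := by
  letI := Classical.decEq {u : α // Irreducible u}
  obtain ⟨hk, hl, hkl, hbet⟩ := hadj
  obtain ⟨z0, hz0, hz0c⟩ := hk
  obtain ⟨w0, hw0, hw0c⟩ := hl
  set Dset : Set ℕ := {n : ℕ | ∃ x ∈ Zk a k, ∃ y ∈ Zk a l, d x y = n} with hDset
  have hne : Dset.Nonempty := ⟨d z0 w0, z0, ⟨hz0, hz0c⟩, w0, ⟨hw0, hw0c⟩, rfl⟩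
  have hDS : dS (Zk a k) (Zk a l) = sInf Dset := rfl
  obtain ⟨z, hzZk, z', hzZl, hdz⟩ := Nat.sInf_mem hne
  obtain ⟨hz, hzc⟩ := hzZk
  obtain ⟨hz', hzc'⟩ := hzZl
  have hza : piF z = a := hz
  have hza' : piF z' = a := hz'
  set g : Fac α := z ∩ z' with hgdef
  set x : Fac α := z - z' with hxdef
  set y : Fac α := z' - z with hydef
  have hxg : x + g = z := by
    ext u
    simp only [hxdef, hgdef, Multiset.count_add, Multiset.count_sub, Multiset.count_inter]
    omega
  have hyg : y + g = z' := by
    ext u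
    simp only [hydef, hgdef, Multiset.count_add, Multiset.count_sub, Multiset.count_inter]
    omega
  have hcx : Multiset.card x + Multiset.card g = k := by
    rw [← Multiset.card_add, hxg, hzc]
  have hcy : Multiset.card y + Multiset.card g = l := by
    rw [← Multiset.card_add, hyg, hzc']
  have hxy : Multiset.card x < Multiset.card y := by omega
  have hb : piF x = piF y := by
    have h1 : piF x * piF g = a := by rw [← piF_add, hxg]; exact hza
    have h2 : piF y * piF g = a := by rw [← piF_add, hyg]; exact hza'
    exact mul_right_cancel (h1.trans h2.symm)
  have hdval : d z z' = Multiset.card y := by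
    rw [d_eq, ← hxdef, ← hydef]
    exact max_eq_right hxy.le
  have hinf : sInf Dset = Multiset.card y := by rw [← hdz, hdval]
  have hZkg : ∀ w : Fac α, piF w = piF x →
      (w + g) ∈ Zk a (Multiset.card w + Multiset.card g) := by
    intro w hw
    refine ⟨?_, by rw [Multiset.card_add]⟩
    show piF (w + g) = a
    rw [piF_add, hw, ← piF_add, hxg]; exact hza
  have hLa : ∀ w : Fac α, piF w = piF x →
      (Multiset.card w + Multiset.card g) ∈ L a := by
    intro w hw
    exact ⟨w + g, (hZkg w hw).1, (hZkg w hw).2⟩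
  have hbadj : Adjacent (piF x) (Multiset.card x) (Multiset.card y) := by
    refine ⟨⟨x, rfl, rfl⟩, ⟨y, hb.symm, rfl⟩, hxy, ?_⟩
    intro m hm h1 h2
    obtain ⟨w, hwZ, hwc⟩ := hm
    have hwx : piF w = piF x := hwZ
    have hmem : m + Multiset.card g ∈ L a := by rw [← hwc]; exact hLa w hwx
    have := hbet _ hmem (by omega) (by omega)
    omega
  have hnochain : ¬ MonRChain (piF x) x y := by
    rintro ⟨n, c, hc0, hcn, hcmem, hcstep⟩
    set f : ℕ → Fac α := fun m => c ⟨min m n, by omega⟩ with hfdef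
    have hfm : ∀ m, (hm : m ≤ n) → f m = c ⟨m, by omega⟩ := by
      intro m hm
      simp only [hfdef]
      congr 1
      exact Fin.ext (by simp [Nat.min_eq_left hm])
    have hf0 : f 0 = x := by
      rw [hfm 0 (Nat.zero_le n)]
      have h0 : (⟨(0 : ℕ), by omega⟩ : Fin (n + 1)) = 0 := by ext; simp
      rw [h0, hc0]
    have hfn : f n = y := by
      rw [hfm n le_rfl]
      exact hcn
    have hstep : ∀ m, m < n → RStep (f m) (f (m + 1)) ∧
        Multiset.card (f m) ≤ Multiset.card (f (m + 1)) := by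
      intro m hm
      have h1 : f m = c (Fin.castSucc ⟨m, hm⟩) := by rw [hfm m hm.le]; rfl
      have h2 : f (m + 1) = c (Fin.succ ⟨m, hm⟩) := by rw [hfm (m + 1) hm]; rfl
      rw [h1, h2]; exact hcstep ⟨m, hm⟩
    have hmemf : ∀ m, piF (f m) = piF x := fun m => hcmem _
    have hfstab : ∀ m, n ≤ m → f m = f n := by
      intro m hm
      simp only [hfdef]
      congr 1
      exact Fin.ext (by simp [Nat.min_eq_right hm])
    have hmono : Monotone fun m => Multiset.card (f m) := by
      apply monotone_nat_of_le_succ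
      intro m
      rcases lt_or_ge m n with h | h
      · exact (hstep m h).2
      · rw [hfstab (m + 1) (by omega), hfstab m h]
    have hbound : ∀ m, Multiset.card x ≤ Multiset.card (f m) ∧
        Multiset.card (f m) ≤ Multiset.card y := by
      intro m
      constructor
      · rw [← hf0]; exact hmono (Nat.zero_le m)
      · rcases le_or_gt m n with h | h
        · rw [← hfn]; exact hmono h
        · rw [hfstab m h.le, hfn]
    have hvals : ∀ m, Multiset.card (f m) = Multiset.card x ∨
        Multiset.card (f m) = Multiset.card y := by
      intro m
      exact hbadj.2.2.2 _ ⟨f m, hmemf m, rfl⟩ (hbound m).1 (hbound m).2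
    have hjump : ∃ m, m < n ∧ Multiset.card (f m) = Multiset.card x ∧
        Multiset.card (f (m + 1)) = Multiset.card y := by
      by_contra hno
      push_neg at hno
      have hall : ∀ m, Multiset.card (f m) = Multiset.card x := by
        intro m
        induction m with
        | zero => rw [hf0]
        | succ m ih =>
          rcases hvals (m + 1) with h | h
          · exact h
          · rcases lt_or_ge m n with hmn | hmn
            · exact absurd h (hno m hmn ih)
            · exfalso
              rw [hfstab m hmn, hfn] at ih
              omega
      have h := hall n
      rw [hfn] at h
      omega
    obtain ⟨m, hmn, hfx, hfy⟩ := hjump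
    obtain ⟨u, hu1, hu2⟩ := (hstep m hmn).1
    have hz1 := hZkg (f m) (hmemf m)
    have hz2 := hZkg (f (m + 1)) (hmemf (m + 1))
    rw [hfx, hcx] at hz1
    rw [hfy, hcy] at hz2
    have hdb : d (f m + g) (f (m + 1) + g) ≤ Multiset.card y - 1 := by
      rw [d_eq, msub_add_right, msub_add_right]
      have b1 := card_msub_shared hu1 hu2
      have b2 := card_msub_shared hu2 hu1
      refine max_le ?_ ?_ <;> omega
    have hle : sInf Dset ≤ d (f m + g) (f (m + 1) + g) :=
      Nat.sInf_le ⟨f m + g, hz1, f (m + 1) + g, hz2, rfl⟩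
    omega
  have hS : (x, y) ∈ relMonMon α := ⟨hb, hxy.le⟩
  have hynz : Multiset.card y ≠ 0 := by omega
  have hatom : IsAtomIn (relMonMon α) (x, y) := by
    refine ⟨hS, ?_, ?_⟩
    · intro h0
      apply hynz
      rw [show y = (0 : Fac α) from congrArg Prod.snd h0]
      simp
    · intro q hq r hr heq
      by_contra hc
      push_neg at hc
      obtain ⟨hq0, hr0⟩ := hc
      obtain ⟨hqπ, hqc⟩ := hq
      obtain ⟨hrπ, hrc⟩ := hr
      have hx12 : x = q.1 + r.1 := congrArg Prod.fst heq
      have hy12 : y = q.2 + r.2 := congrArg Prod.snd heq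
      have e1 : Multiset.card x = Multiset.card q.1 + Multiset.card r.1 := by
        rw [hx12, Multiset.card_add]
      have e2 : Multiset.card y = Multiset.card q.2 + Multiset.card r.2 := by
        rw [hy12, Multiset.card_add]
      have hq2nz : Multiset.card q.2 ≠ 0 := by
        intro h
        apply hq0
        have h2 : q.2 = 0 := Multiset.card_eq_zero.mp h
        have h1 : q.1 = 0 := Multiset.card_eq_zero.mp (by omega)
        exact Prod.ext h1 h2
      have hr2nz : Multiset.card r.2 ≠ 0 := by
        intro h
        apply hr0
        have h2 : r.2 = 0 := Multiset.card_eq_zero.mp h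
        have h1 : r.1 = 0 := Multiset.card_eq_zero.mp (by omega)
        exact Prod.ext h1 h2
      have hmidπ : piF (q.2 + r.1) = piF x := by
        rw [piF_add, ← hqπ, ← piF_add, ← hx12]
      have hmidL := hLa _ hmidπ
      rw [Multiset.card_add] at hmidL
      have hmid := hbet _ hmidL (by omega) (by omega)
      rcases hmid with hK | hLl
      · have hmem1 : (q.2 + r.1) + g ∈ Zk a k := by
          have h := hZkg _ hmidπ
          rwa [show Multiset.card (q.2 + r.1) + Multiset.card g = k from by
            rw [Multiset.card_add]; omega] at h
        have hdb : d ((q.2 + r.1) + g) ((q.2 + r.2) + g) ≤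
            Multiset.card q.2 + Multiset.card r.2 - 1 := by
          rw [d_eq]
          have e3 : (q.2 + r.1) + g - ((q.2 + r.2) + g) = r.1 - r.2 := by
            ext v
            simp only [Multiset.count_sub, Multiset.count_add]
            omega
          have e4 : (q.2 + r.2) + g - ((q.2 + r.1) + g) = r.2 - r.1 := by
            ext v
            simp only [Multiset.count_sub, Multiset.count_add]
            omega
          rw [e3, e4]
          have b1 := card_msub_le r.1 r.2
          have b2 := card_msub_le r.2 r.1
          refine max_le ?_ ?_ <;> omega
        have hle : sInf Dset ≤ d ((q.2 + r.1) + g) ((q.2 + r.2) + g) := by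
          refine Nat.sInf_le ⟨_, hmem1, (q.2 + r.2) + g, ?_, rfl⟩
          rw [show (q.2 + r.2) + g = z' from by rw [← hyg, hy12]]
          exact ⟨hz', hzc'⟩
        omega
      · have hmem1 : (q.2 + r.1) + g ∈ Zk a l := by
          have h := hZkg _ hmidπ
          rwa [show Multiset.card (q.2 + r.1) + Multiset.card g = l from by
            rw [Multiset.card_add]; omega] at h
        have hdb : d ((q.1 + r.1) + g) ((q.2 + r.1) + g) ≤
            Multiset.card q.2 + Multiset.card r.2 - 1 := by
          rw [d_eq]
          have e3 : (q.1 + r.1) + g - ((q.2 + r.1) + g) = q.1 - q.2 := by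
            ext v
            simp only [Multiset.count_sub, Multiset.count_add]
            omega
          have e4 : (q.2 + r.1) + g - ((q.1 + r.1) + g) = q.2 - q.1 := by
            ext v
            simp only [Multiset.count_sub, Multiset.count_add]
            omega
          rw [e3, e4]
          have b1 := card_msub_le q.1 q.2
          have b2 := card_msub_le q.2 q.1
          refine max_le ?_ ?_ <;> omega
        have hle : sInf Dset ≤ d ((q.1 + r.1) + g) ((q.2 + r.1) + g) := by
          refine Nat.sInf_le ⟨(q.1 + r.1) + g, ?_, _, hmem1, rfl⟩
          rw [show (q.1 + r.1) + g = z from by rw [← hxg, hx12]]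
          exact ⟨hz, hzc⟩
        omega
  exact ⟨(x, y), hatom, hxy, hbadj, hnochain, by rw [hDS, hinf]⟩

end Aux

/-- Let `H` be a reduced, commutative, cancellative, atomic monoid. Then
`c_adj(H) ≤ sup{|y| : (x, y) ∈ A(∼_{H,mon}), |x| < |y|, the lengths |x| and |y| are`
`adjacent elements of L(π(x)), and there is no monotone R-chain from x to y}`. -/
theorem stmt13 {α : Type*} [CancelCommMonoid α]
    (hred : Reduced α) (hatomic : Atomic α) :
    cadjH α ≤ sSup {r : ℕ∞ | ∃ p : Fac α × Fac α, IsAtomIn (relMonMon α) p ∧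
      Multiset.card p.1 < Multiset.card p.2 ∧
      Adjacent (piF p.1) (Multiset.card p.1) (Multiset.card p.2) ∧
      ¬ MonRChain (piF p.1) p.1 p.2 ∧ r = (Multiset.card p.2 : ℕ∞)} := by
  refine iSup_le fun a => ?_
  refine sSup_le fun r hr => ?_
  obtain ⟨k, l, hadj, rfl⟩ := hr
  obtain ⟨p, hp1, hp2, hp3, hp4, hp5⟩ := key13 hadj
  rw [hp5]
  exact le_sSup ⟨p, hp1, hp2, hp3, hp4, rfl⟩

end CMR
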